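/- Let B be the infinite lower-triangular integer matrix with entries B_{ij} = i!/(i−j)! for i ≥ j and 0 otherwise (i,j ≥ 0). For any index sets I = {i_1 < … < i_p} and J = {j_1 < … < j_p} of natural numbers with j_k ≤ i_k for all k, the p×p submatrix B(I,J) with entries B_{i_k j_l} has strictly positive determinant. -/

import Mathlib

open Finset Matrix

private lemma descPascal (t m : ℕ) :
    (t + 1).descFactorial (m + 1) = t.descFactorial (m + 1) + (m + 1) * t.descFactorial m := by
  rcases le_or_gt m t with h | h
  · rw [Nat.succ_descFactorial_succ, Nat.descFactorial_succ, ← Nat.add_mul]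
    congr 1
    omega
  · have h1 : t.descFactorial m = 0 := Nat.descFactorial_eq_zero_iff_lt.mpr h
    have h2 : t.descFactorial (m + 1) = 0 :=
      Nat.descFactorial_eq_zero_iff_lt.mpr (by omega)
    rw [Nat.succ_descFactorial_succ, h1, h2]
    simp

private lemma telescope_Ico (f : ℕ → ℝ) {a b : ℕ} (h : a ≤ b) :
    ∑ t ∈ Finset.Ico a b, (f (t + 1) - f t) = f b - f a := by
  induction b, h using Nat.le_induction with
  | base => simp
  | succ b hab ih => rw [Finset.sum_Ico_succ_top (by omega), ih]; ring

private lemma det_zero_of_block {p : ℕ} (M : Matrix (Fin p) (Fin p) ℝ) (k : Fin p)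
    (h : ∀ a b : Fin p, a ≤ k → k ≤ b → M a b = 0) : M.det = 0 := by
  rw [Matrix.det_apply]
  refine Finset.sum_eq_zero fun σ _ => ?_
  have hex : ∃ b : Fin p, k ≤ b ∧ σ b ≤ k := by
    by_contra hc
    push_neg at hc
    have hmaps : ∀ b ∈ Finset.Ici k, σ b ∈ Finset.Ioi k := fun b hb =>
      Finset.mem_Ioi.mpr (hc b (Finset.mem_Ici.mp hb))
    have hcard := Finset.card_le_card_of_injOn σ hmaps (σ.injective.injOn)
    rw [Fin.card_Ici, Fin.card_Ioi] at hcard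
    have := k.is_lt
    omega
  obtain ⟨b, hkb, hbk⟩ := hex
  rw [show (∏ a : Fin p, M (σ a) a) = 0 from
    Finset.prod_eq_zero (Finset.mem_univ b) (h (σ b) b hbk hkb), smul_zero]

private lemma main_aux :
    ∀ N p : ℕ, ∀ i j : Fin p → ℕ, (∑ k, i k) + p ≤ N →
      StrictMono i → StrictMono j → (∀ k, j k ≤ i k) →
      0 < (Matrix.of fun k l : Fin p => ((i k).descFactorial (j l) : ℝ)).det := by
  intro N
  induction N with
  | zero =>
    intro p i j hN hi hj hle
    have hp : p = 0 := by omega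
    subst hp
    rw [Matrix.det_isEmpty]
    norm_num
  | succ N ih =>
    intro p i j hN hi hj hle
    rcases p with _ | p'
    · rw [Matrix.det_isEmpty]; norm_num
    by_cases hj0 : 0 < j 0
    · -- factor out rows
      have hi1 : ∀ k, 1 ≤ i k :=
        fun k => le_trans (le_trans hj0 (hle 0)) (hi.monotone (Fin.zero_le k))
      have hj1 : ∀ l, 1 ≤ j l := fun l => le_trans hj0 (hj.monotone (Fin.zero_le l))
      have hent : (Matrix.of fun k l : Fin (p' + 1) => ((i k).descFactorial (j l) : ℝ))
          = Matrix.of (fun k l : Fin (p' + 1) =>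
              (fun k : Fin (p' + 1) => (i k : ℝ)) k *
              (Matrix.of fun k l : Fin (p' + 1) =>
                (((i k - 1).descFactorial (j l - 1) : ℕ) : ℝ)) k l) := by
        ext k l
        simp only [Matrix.of_apply]
        rw [← Nat.cast_mul]
        congr 1
        have h1 : i k = (i k - 1) + 1 := by have := hi1 k; omega
        have h2 : j l = (j l - 1) + 1 := by have := hj1 l; omega
        calc (i k).descFactorial (j l)
            = ((i k - 1) + 1).descFactorial ((j l - 1) + 1) := by rw [← h1, ← h2]
          _ = ((i k - 1) + 1) * (i k - 1).descFactorial (j l - 1) :=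
              Nat.succ_descFactorial_succ _ _
          _ = (i k) * (i k - 1).descFactorial (j l - 1) := by rw [← h1]
      have hdet : (Matrix.of fun k l : Fin (p' + 1) => ((i k).descFactorial (j l) : ℝ)).det
          = (∏ k : Fin (p' + 1), (i k : ℝ)) *
            (Matrix.of fun k l : Fin (p' + 1) =>
              (((i k - 1).descFactorial (j l - 1) : ℕ) : ℝ)).det := by
        rw [hent]
        exact Matrix.det_mul_column _ _
      rw [hdet]
      have e1 : ∑ k : Fin (p' + 1), ((i k - 1) + 1) = ∑ k : Fin (p' + 1), i k :=
        Finset.sum_congr rfl fun k _ => by have := hi1 k; omega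
      have e2 : ∑ k : Fin (p' + 1), ((i k - 1) + 1)
          = (∑ k : Fin (p' + 1), (i k - 1)) + (p' + 1) := by
        rw [Finset.sum_add_distrib]; simp
      have hmeas : (∑ k : Fin (p' + 1), (i k - 1)) + (p' + 1) ≤ N := by omega
      have hi' : StrictMono fun k : Fin (p' + 1) => i k - 1 := fun a b hab => by
        have := hi hab; have := hi1 a; simp only; omega
      have hj' : StrictMono fun l : Fin (p' + 1) => j l - 1 := fun a b hab => by
        have := hj hab; have := hj1 a; simp only; omega
      have hle' : ∀ k, (fun l => j l - 1) k ≤ (fun k => i k - 1) k := fun k => by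
        have := hle k; simp only; omega
      have hpos := ih (p' + 1) (fun k => i k - 1) (fun l => j l - 1) hmeas hi' hj' hle'
      have hprod : 0 < ∏ k : Fin (p' + 1), (i k : ℝ) :=
        Finset.prod_pos fun k _ => by exact_mod_cast hi1 k
      exact mul_pos hprod hpos
    · -- j 0 = 0 case
      have hj0' : j 0 = 0 := by omega
      set M : Matrix (Fin (p' + 1)) (Fin (p' + 1)) ℝ :=
        Matrix.of fun k l => ((i k).descFactorial (j l) : ℝ) with hM
      set B : Matrix (Fin (p' + 1)) (Fin (p' + 1)) ℝ :=
        Matrix.of fun k l => Fin.cases (motive := fun _ => ℝ) (M 0 l)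
          (fun k' => M k'.succ l - M k'.castSucc l) k with hB
      have hMB : M.det = B.det := by
        apply Matrix.det_eq_of_forall_row_eq_smul_add_pred (fun _ => (1 : ℝ))
        · intro l; simp [hB]
        · intro k' l; simp [hB]
      have hB00 : B 0 0 = 1 := by simp [hB, hM, hj0']
      have hcol : ∀ k' : Fin p', B k'.succ 0 = 0 := by
        intro k'; simp [hB, hM, hj0']
      have hBdet : B.det = (B.submatrix Fin.succ Fin.succ).det := by
        rw [Matrix.det_succ_column_zero, Finset.sum_eq_single (0 : Fin (p' + 1))]
        · simp [hB00, Fin.succAbove_zero]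
        · intro b _ hb
          obtain ⟨k', hk'⟩ := Fin.exists_succ_eq.mpr hb
          rw [← hk', hcol k']
          ring
        · intro habs; exact absurd (Finset.mem_univ _) habs
      have hj1 : ∀ l : Fin p', 1 ≤ j l.succ := fun l => by
        have := hj (Fin.succ_pos l); omega
      have hik : ∀ k : Fin p', i k.castSucc ≤ i k.succ :=
        fun k => (hi (Fin.castSucc_lt_succ : k.castSucc < k.succ)).le
      have hentry : ∀ k l : Fin p',
          (B.submatrix Fin.succ Fin.succ) k l
            = (j l.succ : ℝ) * ∑ t ∈ Finset.Ico (i k.castSucc) (i k.succ),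
                ((t.descFactorial (j l.succ - 1) : ℕ) : ℝ) := by
        intro k l
        have hsub : (B.submatrix Fin.succ Fin.succ) k l
            = (((i k.succ).descFactorial (j l.succ) : ℕ) : ℝ)
              - (((i k.castSucc).descFactorial (j l.succ) : ℕ) : ℝ) := by
          simp [hB, hM]
        have hjl : j l.succ = (j l.succ - 1) + 1 := by have := hj1 l; omega
        have htel := telescope_Ico
          (fun t => ((t.descFactorial ((j l.succ - 1) + 1) : ℕ) : ℝ)) (hik k)
        have hstep : ∀ t : ℕ,
            (((t + 1).descFactorial ((j l.succ - 1) + 1) : ℕ) : ℝ)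
              - ((t.descFactorial ((j l.succ - 1) + 1) : ℕ) : ℝ)
            = (((j l.succ - 1) + 1 : ℕ) : ℝ) * ((t.descFactorial (j l.succ - 1) : ℕ) : ℝ) := by
          intro t
          have h := descPascal t (j l.succ - 1)
          have h2 : (((t + 1).descFactorial ((j l.succ - 1) + 1) : ℕ) : ℝ)
              = ((t.descFactorial ((j l.succ - 1) + 1) : ℕ) : ℝ)
                + (((j l.succ - 1) + 1 : ℕ) : ℝ) * ((t.descFactorial (j l.succ - 1) : ℕ) : ℝ) := by
            exact_mod_cast congrArg (Nat.cast : ℕ → ℝ) h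
          rw [h2]; ring
        rw [hsub]
        conv_lhs => rw [hjl]
        rw [← htel, Finset.sum_congr rfl (fun t _ => hstep t), ← Finset.mul_sum]
        rw [← hjl]
      have hsubm : (B.submatrix Fin.succ Fin.succ)
          = Matrix.of (fun k l : Fin p' =>
              (fun l : Fin p' => (j l.succ : ℝ)) l *
              (Matrix.of fun k l : Fin p' =>
                ∑ t ∈ Finset.Ico (i k.castSucc) (i k.succ),
                  ((t.descFactorial (j l.succ - 1) : ℕ) : ℝ)) k l) := by
        ext k l
        exact hentry k l
      have hdet2 : (B.submatrix Fin.succ Fin.succ).det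
          = (∏ l : Fin p', (j l.succ : ℝ)) *
            (Matrix.of fun k l : Fin p' =>
              ∑ t ∈ Finset.Ico (i k.castSucc) (i k.succ),
                ((t.descFactorial (j l.succ - 1) : ℕ) : ℝ)).det := by
        rw [hsubm]
        exact Matrix.det_mul_row _ _
      have hrows : (Matrix.of fun k l : Fin p' =>
            ∑ t ∈ Finset.Ico (i k.castSucc) (i k.succ),
              ((t.descFactorial (j l.succ - 1) : ℕ) : ℝ))
          = fun k : Fin p' => ∑ t ∈ Finset.Ico (i k.castSucc) (i k.succ),
              (fun l : Fin p' => ((t.descFactorial (j l.succ - 1) : ℕ) : ℝ)) := by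
        funext k l
        simp [Finset.sum_apply]
      have hexp : (Matrix.of fun k l : Fin p' =>
            ∑ t ∈ Finset.Ico (i k.castSucc) (i k.succ),
              ((t.descFactorial (j l.succ - 1) : ℕ) : ℝ)).det
          = ∑ r ∈ Fintype.piFinset (fun k : Fin p' => Finset.Ico (i k.castSucc) (i k.succ)),
              (Matrix.of fun k l : Fin p' =>
                (((r k).descFactorial (j l.succ - 1) : ℕ) : ℝ)).det := by
        have h := (Matrix.detRowAlternating :
            AlternatingMap ℝ (Fin p' → ℝ) ℝ (Fin p')).toMultilinearMap.map_sum_finset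
          (g := fun (k : Fin p') (t : ℕ) =>
            fun l : Fin p' => ((t.descFactorial (j l.succ - 1) : ℕ) : ℝ))
          (A := fun k : Fin p' => Finset.Ico (i k.castSucc) (i k.succ))
        rw [hrows]
        exact h
      -- measure helper
      have hsumsucc : (∑ k : Fin (p' + 1), i k) = i 0 + ∑ k : Fin p', i k.succ :=
        Fin.sum_univ_succ i
      have hmeas_r : ∀ r : Fin p' → ℕ, (∀ k, r k < i k.succ) → (∑ k, r k) + p' ≤ N := by
        intro r hr
        have h2 : (∑ k : Fin p', (r k + 1)) ≤ ∑ k : Fin p', i k.succ :=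
          Finset.sum_le_sum fun k _ => hr k
        have h3 : (∑ k : Fin p', (r k + 1)) = (∑ k : Fin p', r k) + p' := by
          rw [Finset.sum_add_distrib]; simp
        omega
      have hjj : StrictMono fun l : Fin p' => j l.succ - 1 := fun a b hab => by
        have := hj (Fin.succ_lt_succ_iff.mpr hab)
        have := hj1 a
        simp only
        omega
      have hterm_nonneg : ∀ r ∈ Fintype.piFinset
            (fun k : Fin p' => Finset.Ico (i k.castSucc) (i k.succ)),
          0 ≤ (Matrix.of fun k l : Fin p' =>
              (((r k).descFactorial (j l.succ - 1) : ℕ) : ℝ)).det := by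
        intro r hrmem
        rw [Fintype.mem_piFinset] at hrmem
        have hr1 : ∀ k, i k.castSucc ≤ r k := fun k => (Finset.mem_Ico.mp (hrmem k)).1
        have hr2 : ∀ k, r k < i k.succ := fun k => (Finset.mem_Ico.mp (hrmem k)).2
        have hrmono : StrictMono r := by
          intro a b hab
          have hstep : (a.succ : Fin (p' + 1)) ≤ b.castSucc := by
            rw [Fin.le_def]
            simp only [Fin.val_succ, Fin.coe_castSucc]
            exact hab
          calc r a < i a.succ := hr2 a
            _ ≤ i b.castSucc := hi.monotone hstep
            _ ≤ r b := hr1 b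
        by_cases hcov : ∀ k, j k.succ - 1 ≤ r k
        · exact le_of_lt (ih p' r (fun l => j l.succ - 1)
            (hmeas_r r hr2) hrmono hjj hcov)
        · push_neg at hcov
          obtain ⟨k₀, hk₀⟩ := hcov
          have : (Matrix.of fun k l : Fin p' =>
              (((r k).descFactorial (j l.succ - 1) : ℕ) : ℝ)).det = 0 := by
            apply det_zero_of_block _ k₀
            intro a b hak hkb
            simp only [Matrix.of_apply]
            have : r a < j b.succ - 1 := by
              calc r a ≤ r k₀ := hrmono.monotone hak
                _ < j k₀.succ - 1 := hk₀
                _ ≤ j b.succ - 1 := (hjj.monotone hkb)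
            rw [Nat.descFactorial_eq_zero_iff_lt.mpr this]
            exact Nat.cast_zero
          rw [this]
      have hi0succ : ∀ k : Fin p', 1 ≤ i k.succ := fun k => by
        have := hi (Fin.succ_pos k); omega
      have hr₀mem : (fun k : Fin p' => i k.succ - 1) ∈ Fintype.piFinset
          (fun k : Fin p' => Finset.Ico (i k.castSucc) (i k.succ)) := by
        rw [Fintype.mem_piFinset]
        intro k
        rw [Finset.mem_Ico]
        have h1 := hi (Fin.castSucc_lt_succ : k.castSucc < k.succ)
        have h2 := hi0succ k
        omega
      have hr₀mono : StrictMono fun k : Fin p' => i k.succ - 1 := fun a b hab => by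
        have := hi (Fin.succ_lt_succ_iff.mpr hab)
        have := hi0succ a
        simp only
        omega
      have hterm_pos : 0 < (Matrix.of fun k l : Fin p' =>
          ((((fun k : Fin p' => i k.succ - 1) k).descFactorial (j l.succ - 1) : ℕ) : ℝ)).det := by
        apply ih p' (fun k => i k.succ - 1) (fun l => j l.succ - 1)
        · exact hmeas_r _ (fun k => by have := hi0succ k; omega)
        · exact hr₀mono
        · exact hjj
        · intro k
          have := hle k.succ
          omega
      have hprodpos : 0 < ∏ l : Fin p', (j l.succ : ℝ) :=
        Finset.prod_pos fun l _ => by exact_mod_cast hj1 l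
      rw [hMB, hBdet, hdet2, hexp]
      refine mul_pos hprodpos ?_
      calc (0 : ℝ) < _ := hterm_pos
        _ ≤ _ := Finset.single_le_sum hterm_nonneg hr₀mem

theorem descFactorial_submatrix_det_pos
    (p : ℕ) (i j : Fin p → ℕ)
    (hi : StrictMono i) (hj : StrictMono j)
    (hle : ∀ k, j k ≤ i k) :
    0 < (Matrix.of fun k l : Fin p => ((i k).descFactorial (j l) : ℝ)).det :=
  main_aux ((∑ k, i k) + p) p i j le_rfl hi hj hle
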